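/- Let X be an N×N complex matrix all of whose eigenvalues have strictly positive real part, and let C be an N×N Hermitian matrix. Then there exists a unique N×N complex matrix Z satisfying Z⬝X + Xᴴ⬝Z = C, and this Z is Hermitian. -/

import Mathlib

open Matrix Polynomial

lemma charpoly_eval' {N : ℕ} (M : Matrix (Fin N) (Fin N) ℂ) (μ : ℂ) :
    (M.charpoly).eval μ = det (Matrix.scalar (Fin N) μ - M) := by
  rw [Matrix.charpoly, eval_det, matPolyEquiv_charmatrix]
  simp

lemma algebraMap_eq_scalar' {N : ℕ} (μ : ℂ) :
    (algebraMap ℂ (Matrix (Fin N) (Fin N) ℂ)) μ = Matrix.scalar (Fin N) μ := by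
  rw [Matrix.algebraMap_eq_diagonal, Matrix.scalar_apply]
  simp

lemma mem_spectrum_iff_root' {N : ℕ} (M : Matrix (Fin N) (Fin N) ℂ) (μ : ℂ) :
    μ ∈ spectrum ℂ M ↔ (M.charpoly).eval μ = 0 := by
  rw [spectrum.mem_iff, charpoly_eval', ← algebraMap_eq_scalar',
    Matrix.isUnit_iff_isUnit_det, isUnit_iff_ne_zero, not_not, algebraMap_eq_scalar']

lemma spectrum_nonempty' {N : ℕ} (hN : 0 < N) (M : Matrix (Fin N) (Fin N) ℂ) :
    (spectrum ℂ M).Nonempty := by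
  obtain ⟨μ, hμ⟩ := IsAlgClosed.exists_root (k := ℂ) M.charpoly (by
    rw [M.charpoly_degree_eq_dim, Fintype.card_fin]
    exact_mod_cast hN.ne')
  exact ⟨μ, (mem_spectrum_iff_root' M μ).2 hμ⟩

lemma mem_spectrum_conjTranspose {N : ℕ} (M : Matrix (Fin N) (Fin N) ℂ) (μ : ℂ) :
    μ ∈ spectrum ℂ Mᴴ ↔ (starRingEnd ℂ) μ ∈ spectrum ℂ M := by
  rw [spectrum.mem_iff, spectrum.mem_iff, algebraMap_eq_scalar', algebraMap_eq_scalar',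
    Matrix.isUnit_iff_isUnit_det, Matrix.isUnit_iff_isUnit_det]
  have key : (Matrix.scalar (Fin N) μ - Mᴴ) = (Matrix.scalar (Fin N) ((starRingEnd ℂ) μ) - M)ᴴ := by
    rw [conjTranspose_sub, Matrix.scalar_apply, Matrix.scalar_apply, diagonal_conjTranspose]
    simp [Pi.star_def]
  rw [key, det_conjTranspose, isUnit_iff_ne_zero, isUnit_iff_ne_zero]
  simp

lemma intertwine {N : ℕ} (A B Z : Matrix (Fin N) (Fin N) ℂ) (h : Z * A = B * Z) (p : ℂ[X]) :
    Z * (aeval A p) = (aeval B p) * Z := by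
  induction p using Polynomial.induction_on' with
  | add p q hp hq => rw [map_add, map_add, mul_add, add_mul, hp, hq]
  | monomial n a =>
    have hpow : ∀ n : ℕ, Z * A ^ n = B ^ n * Z := by
      intro n
      induction n with
      | zero => simp
      | succ k ih => rw [pow_succ, pow_succ, ← mul_assoc, ih, mul_assoc, h, ← mul_assoc]
    rw [aeval_monomial, aeval_monomial, ← Algebra.smul_def, ← Algebra.smul_def,
      mul_smul_comm, smul_mul_assoc, hpow]

lemma ker_zero {N : ℕ} (X : Matrix (Fin N) (Fin N) ℂ)
    (hX : ∀ μ ∈ spectrum ℂ X, 0 < μ.re)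
    (Z : Matrix (Fin N) (Fin N) ℂ) (h : Z * X + Xᴴ * Z = 0) : Z = 0 := by
  rcases Nat.eq_zero_or_pos N with hN | hN
  · subst hN; exact Subsingleton.elim _ _
  · have hint : Z * X = (-Xᴴ) * Z := by
      rw [neg_mul, eq_neg_iff_add_eq_zero]; exact h
    have key := intertwine X (-Xᴴ) Z hint X.charpoly
    rw [Matrix.aeval_self_charpoly, mul_zero] at key
    have hunit : IsUnit (aeval (-Xᴴ) X.charpoly) := by
      by_contra hnu
      have h0 : (0 : ℂ) ∈ spectrum ℂ (aeval (-Xᴴ) X.charpoly) := (spectrum.zero_mem_iff ℂ).2 hnu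
      rw [spectrum.map_polynomial_aeval_of_nonempty _ _ (spectrum_nonempty' hN _)] at h0
      obtain ⟨k, hk, hk0⟩ := h0
      have h1 : k ∈ spectrum ℂ X := (mem_spectrum_iff_root' X k).2 hk0
      have h2 : -k ∈ spectrum ℂ Xᴴ := by
        rw [← spectrum.neg_eq, Set.mem_neg] at hk
        exact hk
      have h3 := (mem_spectrum_conjTranspose X (-k)).1 h2
      have p1 := hX k h1
      have p2 := hX _ h3
      simp only [map_neg, Complex.neg_re, Complex.conj_re] at p2
      linarith
    exact hunit.mul_left_cancel (by rw [mul_zero, ← key])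

theorem stmt_3 {N : ℕ} (X C : Matrix (Fin N) (Fin N) ℂ)
    (hX : ∀ μ ∈ spectrum ℂ X, 0 < μ.re)
    (hC : C.IsHermitian) :
    (∃! Z : Matrix (Fin N) (Fin N) ℂ, Z * X + Xᴴ * Z = C) ∧
    (∀ Z : Matrix (Fin N) (Fin N) ℂ, Z * X + Xᴴ * Z = C → Z.IsHermitian) := by
  set T : Matrix (Fin N) (Fin N) ℂ →ₗ[ℂ] Matrix (Fin N) (Fin N) ℂ :=
    { toFun := fun Z => Z * X + Xᴴ * Z
      map_add' := fun a b => by simp [add_mul, mul_add]; abel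
      map_smul' := fun c a => by simp [smul_mul_assoc, mul_smul_comm, smul_add] } with hT
  have hTapp : ∀ Z, T Z = Z * X + Xᴴ * Z := fun Z => rfl
  have hinj : Function.Injective T := by
    intro a b hab
    have h0 : T (a - b) = 0 := by rw [map_sub, hab, sub_self]
    rw [hTapp, sub_mul, mul_sub] at h0
    have h0' : (a - b) * X + Xᴴ * (a - b) = 0 := by
      rw [sub_mul, mul_sub]; exact h0
    have := ker_zero X hX (a - b) h0'
    rwa [sub_eq_zero] at this
  have hsurj : Function.Surjective T := LinearMap.injective_iff_surjective.1 hinj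
  obtain ⟨Z0, hZ0⟩ := hsurj C
  rw [hTapp] at hZ0
  have herm : ∀ Z : Matrix (Fin N) (Fin N) ℂ, Z * X + Xᴴ * Z = C → Z.IsHermitian := by
    intro Z hZ
    have h' : Zᴴ * X + Xᴴ * Zᴴ = C := by
      have := congrArg conjTranspose hZ
      rw [conjTranspose_add, conjTranspose_mul, conjTranspose_mul,
        conjTranspose_conjTranspose, hC.eq] at this
      rw [add_comm]; exact this
    exact hinj (by rw [hTapp, hTapp, h', hZ])
  refine ⟨⟨Z0, hZ0, fun Z hZ => hinj (by rw [hTapp, hTapp, hZ, hZ0])⟩, herm⟩
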